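/- Let φ be a field automorphism of a field F with fixed field K, let k ≤ n ≤ [F:K], and let f_1,...,f_n ∈ F be linearly independent over K. Let L_k be the F-space of operators L = Σ_{i=0}^{k-1} g_i φ^i (g_i ∈ F), and define Ev(L) = (L(f_1),...,L(f_n)) ∈ F^n. Then C = Ev(L_k) is an F-linear subspace of F^n of dimension k over F, and every nonzero codeword of C has rank (K-dimension of the K-span of its coordinates) at least n - k + 1; i.e., C is an MRD code with minimum rank distance exactly n - k + 1. -/

import Mathlib

/-- The fixed subfield of a field automorphism. -/
def fixedSubfield {F : Type*} [Field F] (e : F ≃+* F) : Subfield F where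
  carrier := {a | e a = a}
  mul_mem' := by intro a b ha hb; simp only [Set.mem_setOf_eq, map_mul] at *; rw [ha, hb]
  one_mem' := by simp
  add_mem' := by intro a b ha hb; simp only [Set.mem_setOf_eq, map_add] at *; rw [ha, hb]
  zero_mem' := by simp
  neg_mem' := by intro a ha; simp only [Set.mem_setOf_eq, map_neg] at *; rw [ha]
  inv_mem' := by intro a ha; simp only [Set.mem_setOf_eq, map_inv₀] at *; rw [ha]

set_option maxHeartbeats 1000000
set_option synthInstance.maxHeartbeats 200000

namespace Stmt15Aux
variable {F : Type*} [Field F] (e : F ≃+* F)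

lemma iter_smul (i : ℕ) (a : fixedSubfield e) (x : F) :
    (⇑e)^[i] ((a : F) * x) = (a : F) * (⇑e)^[i] x := by
  induction i with
  | zero => simp
  | succ i ih =>
    rw [Function.iterate_succ_apply', ih, map_mul, a.2, Function.iterate_succ_apply' e i x]

def opL (k : ℕ) (g : Fin k → F) : F →ₗ[fixedSubfield e] F where
  toFun x := ∑ i : Fin k, g i * (⇑e)^[(i : ℕ)] x
  map_add' x y := by simp [iterate_map_add, mul_add, Finset.sum_add_distrib]
  map_smul' a x := by
    simp only [RingHom.id_apply]
    rw [Finset.smul_sum]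
    refine Finset.sum_congr rfl fun i _ => ?_
    show g i * (⇑e)^[(i : ℕ)] ((a : F) * x) = (a : F) • (g i * (⇑e)^[(i : ℕ)] x)
    rw [iter_smul]
    show _ = (a : F) * (g i * (⇑e)^[(i : ℕ)] x)
    ring



lemma mooreA' : ∀ (k : ℕ) (x c : Fin k → F),
    LinearIndependent (fixedSubfield e) x →
    (∀ i : Fin k, ∑ j, c j * (⇑e)^[(i : ℕ)] (x j) = 0) → c = 0 := by
  intro k
  induction k with
  | zero => intro x c _ _; funext j; exact j.elim0
  | succ k ih =>
    intro x c hx heq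
    by_contra hc
    obtain ⟨j0, hj0⟩ : ∃ j, c j ≠ 0 := by
      by_contra h; push_neg at h; exact hc (funext h)
    set σ : Equiv.Perm (Fin (k + 1)) := Equiv.swap j0 (Fin.last k) with hσ
    set x' : Fin (k + 1) → F := x ∘ σ with hx'def
    have hx' : LinearIndependent (fixedSubfield e) x' := hx.comp σ σ.injective
    set c' : Fin (k + 1) → F := fun j => (c j0)⁻¹ * c (σ j) with hc'def
    have hclast : c' (Fin.last k) = 1 := by
      simp only [hc'def, hσ, Equiv.swap_apply_right]
      exact inv_mul_cancel₀ hj0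
    have heq' : ∀ i : Fin (k + 1), ∑ j, c' j * (⇑e)^[(i : ℕ)] (x' j) = 0 := by
      intro i
      have hs : ∑ j, c (σ j) * (⇑e)^[(i : ℕ)] (x (σ j)) = 0 := by
        rw [Equiv.sum_comp σ (fun j => c j * (⇑e)^[(i : ℕ)] (x j))]
        exact heq i
      calc ∑ j, c' j * (⇑e)^[(i : ℕ)] (x' j)
          = (c j0)⁻¹ * ∑ j, c (σ j) * (⇑e)^[(i : ℕ)] (x (σ j)) := by
            rw [Finset.mul_sum]
            refine Finset.sum_congr rfl fun j _ => ?_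
            simp only [hc'def, hx'def, Function.comp_apply]
            ring
        _ = 0 := by rw [hs, mul_zero]
    set d : Fin (k + 1) → F := fun j => e (c' j) - c' j with hddef
    have hdlast : d (Fin.last k) = 0 := by simp [hddef, hclast]
    have hterm : ∀ (i : ℕ) (j : Fin (k + 1)),
        e (c' j * (⇑e)^[i] (x' j)) = e (c' j) * (⇑e)^[i + 1] (x' j) := by
      intro i j
      rw [_root_.map_mul, Function.iterate_succ_apply' e i (x' j)]
    have hkey : ∀ i : Fin k, ∑ j, d j * (⇑e)^[(i : ℕ) + 1] (x' j) = 0 := by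
      intro i
      have hcast := heq' i.castSucc
      rw [show ((i.castSucc : Fin (k+1)) : ℕ) = (i : ℕ) from rfl] at hcast
      have h1' : ∑ j, e (c' j) * (⇑e)^[(i : ℕ) + 1] (x' j) = 0 := by
        calc ∑ j, e (c' j) * (⇑e)^[(i : ℕ) + 1] (x' j)
            = ∑ j, e (c' j * (⇑e)^[(i : ℕ)] (x' j)) :=
              Finset.sum_congr rfl fun j _ => (hterm _ j).symm
          _ = e (∑ j, c' j * (⇑e)^[(i : ℕ)] (x' j)) := (map_sum e _ _).symm
          _ = e 0 := by rw [hcast]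
          _ = 0 := map_zero e
      have h2 := heq' i.succ
      rw [show ((i.succ : Fin (k+1)) : ℕ) = (i : ℕ) + 1 from rfl] at h2
      calc ∑ j, d j * (⇑e)^[(i : ℕ) + 1] (x' j)
          = ∑ j, (e (c' j) * (⇑e)^[(i : ℕ) + 1] (x' j)
              - c' j * (⇑e)^[(i : ℕ) + 1] (x' j)) := by
            refine Finset.sum_congr rfl fun j _ => ?_
            rw [hddef, sub_mul]
        _ = (∑ j, e (c' j) * (⇑e)^[(i : ℕ) + 1] (x' j))
            - ∑ j, c' j * (⇑e)^[(i : ℕ) + 1] (x' j) := Finset.sum_sub_distrib _ _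
        _ = 0 := by rw [h1', h2, sub_zero]
    have hkey2 : ∀ i : Fin k,
        ∑ j : Fin k, e.symm (d j.castSucc) * (⇑e)^[(i : ℕ)] (x' j.castSucc) = 0 := by
      intro i
      have h3 := hkey i
      rw [Fin.sum_univ_castSucc, hdlast, zero_mul, add_zero] at h3
      have hterm2 : ∀ j : Fin k,
          e.symm (d j.castSucc * (⇑e)^[(i : ℕ) + 1] (x' j.castSucc))
            = e.symm (d j.castSucc) * (⇑e)^[(i : ℕ)] (x' j.castSucc) := by
        intro j
        rw [_root_.map_mul]
        congr 1
        rw [Function.iterate_succ_apply' e (i : ℕ) (x' j.castSucc)]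
        exact e.symm_apply_apply _
      calc ∑ j : Fin k, e.symm (d j.castSucc) * (⇑e)^[(i : ℕ)] (x' j.castSucc)
          = ∑ j : Fin k, e.symm (d j.castSucc * (⇑e)^[(i : ℕ) + 1] (x' j.castSucc)) :=
            Finset.sum_congr rfl fun j _ => (hterm2 j).symm
        _ = e.symm (∑ j : Fin k, d j.castSucc * (⇑e)^[(i : ℕ) + 1] (x' j.castSucc)) :=
            (map_sum e.symm _ _).symm
        _ = e.symm 0 := by rw [h3]
        _ = 0 := map_zero e.symm
    have hd0 : ∀ j : Fin k, e.symm (d j.castSucc) = 0 := by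
      intro j
      have hih := ih (x' ∘ Fin.castSucc) (fun j => e.symm (d j.castSucc))
        (hx'.comp _ (Fin.castSucc_injective k)) (fun i => hkey2 i)
      exact congrFun hih j
    have hdall : ∀ j : Fin (k + 1), d j = 0 := by
      intro j
      induction j using Fin.lastCases with
      | last => exact hdlast
      | cast j => exact e.symm.injective (by rw [hd0 j, map_zero])
    have hmem : ∀ j, c' j ∈ fixedSubfield e := fun j => sub_eq_zero.mp (hdall j)
    have h0 := heq' 0
    simp only [Fin.val_zero, Function.iterate_zero, id_eq] at h0
    have hsum : ∑ j, (⟨c' j, hmem j⟩ : fixedSubfield e) • x' j = 0 := by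
      rw [← h0]
      rfl
    have hz := Fintype.linearIndependent_iff.mp hx'
      (fun j => (⟨c' j, hmem j⟩ : fixedSubfield e)) hsum (Fin.last k)
    have h10 : c' (Fin.last k) = 0 := by simpa using congrArg Subtype.val hz
    rw [hclast] at h10
    exact one_ne_zero h10

lemma mooreB' (k : ℕ) (x g : Fin k → F)
    (hx : LinearIndependent (fixedSubfield e) x)
    (heq : ∀ j : Fin k, ∑ i : Fin k, g i * (⇑e)^[(i : ℕ)] (x j) = 0) : g = 0 := by
  set M : Matrix (Fin k) (Fin k) F := Matrix.of (fun i j => (⇑e)^[(i : ℕ)] (x j)) with hM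
  have hdet : M.det ≠ 0 := by
    intro h
    obtain ⟨v, hv, hMv⟩ := (Matrix.exists_mulVec_eq_zero_iff).mpr h
    apply hv
    apply mooreA' e k x v hx
    intro i
    have h5 := congrFun hMv i
    rw [Pi.zero_apply] at h5
    rw [← h5]
    simp only [Matrix.mulVec, dotProduct, hM, Matrix.of_apply]
    exact Finset.sum_congr rfl fun j _ => mul_comm _ _
  by_contra hg
  have hdt : M.transpose.det = 0 := by
    rw [← Matrix.exists_mulVec_eq_zero_iff]
    refine ⟨g, hg, funext fun j => ?_⟩
    rw [Pi.zero_apply]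
    have h6 : M.transpose.mulVec g j = ∑ i : Fin k, g i * (⇑e)^[(i : ℕ)] (x j) := by
      simp only [Matrix.mulVec, dotProduct, Matrix.transpose_apply, hM, Matrix.of_apply]
      exact Finset.sum_congr rfl fun i _ => mul_comm _ _
    rw [h6, heq j]
  rw [Matrix.det_transpose] at hdt
  exact hdet hdt



lemma eval_rank (e : F ≃+* F) (n k : ℕ) (hk : 0 < k) (hkn : k ≤ n)
    (f : Fin n → F) (hf : LinearIndependent (fixedSubfield e) f)
    (g : Fin k → F) (hg : g ≠ 0) (c : Fin n → F)
    (hc : ∀ j, c j = ∑ i : Fin k, g i * (⇑e)^[(i : ℕ)] (f j)) :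
    (n - k + 1 ≤ Module.finrank (fixedSubfield e)
      (Submodule.span (fixedSubfield e) (Set.range c))) ∧
    ((∀ j : Fin n, (j : ℕ) < k - 1 → c j = 0) →
      Module.finrank (fixedSubfield e)
        (Submodule.span (fixedSubfield e) (Set.range c)) = n - k + 1) := by
  set L := opL e k g with hL
  set V : Submodule (fixedSubfield e) F := Submodule.span (fixedSubfield e) (Set.range f) with hV
  haveI hVfin : FiniteDimensional (fixedSubfield e) V :=
    FiniteDimensional.span_of_finite (fixedSubfield e) (Set.finite_range f)
  have hVrank : Module.finrank (fixedSubfield e) V = n := by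
    rw [hV, finrank_span_eq_card hf, Fintype.card_fin]
  set T : V →ₗ[fixedSubfield e] F := L.comp V.subtype with hT
  have hrange : LinearMap.range T = Submodule.span (fixedSubfield e) (Set.range c) := by
    have hcf : Set.range c = ⇑L '' Set.range f := by
      have hcL : c = ⇑L ∘ f := funext fun j => by rw [hc j]; rfl
      rw [hcL, Set.range_comp]
    rw [hT, LinearMap.range_comp, Submodule.range_subtype, hV, Submodule.map_span, ← hcf]
  have hker : Module.finrank (fixedSubfield e) (LinearMap.ker T) ≤ k - 1 := by
    by_contra h
    push_neg at h
    have hk' : k ≤ Module.finrank (fixedSubfield e) (LinearMap.ker T) := by omega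
    haveI : FiniteDimensional (fixedSubfield e) (LinearMap.ker T) :=
      FiniteDimensional.finiteDimensional_submodule _
    haveI : Module.Free (fixedSubfield e) (LinearMap.ker T) := by
      exact Module.Free.of_divisionRing (fixedSubfield e) (LinearMap.ker T)
    let b := Module.finBasis (fixedSubfield e) (LinearMap.ker T)
    have hyli : LinearIndependent (fixedSubfield e)
        fun i : Fin k => (((b (Fin.castLE hk' i) : V) : F)) := by
      have h1 : LinearIndependent (fixedSubfield e) fun i : Fin k => b (Fin.castLE hk' i) :=
        b.linearIndependent.comp _ (Fin.castLE_injective hk')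
      have h2 := h1.map_injOn (LinearMap.ker T).subtype Subtype.val_injective.injOn
      have h3 := h2.map_injOn V.subtype Subtype.val_injective.injOn
      exact h3
    apply hg
    refine mooreB' e k _ g hyli fun j => ?_
    have hmem := (b (Fin.castLE hk' j)).2
    rw [LinearMap.mem_ker] at hmem
    exact hmem
  have hsum := LinearMap.finrank_range_add_finrank_ker T
  rw [hVrank] at hsum
  constructor
  · rw [← hrange]
    omega
  · intro hvanish
    have h1 : k - 1 ≤ n := by omega
    have hlow : k - 1 ≤ Module.finrank (fixedSubfield e) (LinearMap.ker T) := by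
      have hwli : LinearIndependent (fixedSubfield e) fun j : Fin (k-1) =>
          (⟨⟨f (Fin.castLE h1 j), Submodule.subset_span (Set.mem_range_self _)⟩, by
            rw [LinearMap.mem_ker]
            show L (f (Fin.castLE h1 j)) = 0
            have hLc : L (f (Fin.castLE h1 j)) = c (Fin.castLE h1 j) := (hc _).symm
            rw [hLc]
            exact hvanish _ (j.2)⟩ : LinearMap.ker T) := by
        apply LinearIndependent.of_comp (V.subtype.comp (LinearMap.ker T).subtype)
        have hcomp : (⇑(V.subtype.comp (LinearMap.ker T).subtype)) ∘ (fun j : Fin (k-1) =>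
            (⟨⟨f (Fin.castLE h1 j), Submodule.subset_span (Set.mem_range_self _)⟩, by
            rw [LinearMap.mem_ker]
            show L (f (Fin.castLE h1 j)) = 0
            have hLc : L (f (Fin.castLE h1 j)) = c (Fin.castLE h1 j) := (hc _).symm
            rw [hLc]
            exact hvanish _ (j.2)⟩ : LinearMap.ker T)) = f ∘ Fin.castLE h1 :=
          funext fun j => rfl
        rw [hcomp]
        exact hf.comp _ (Fin.castLE_injective h1)
      have hcard := hwli.fintype_card_le_finrank
      rwa [Fintype.card_fin] at hcard
    rw [← hrange]
    omega

end Stmt15Aux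

/-- Evaluation of operators Σ_{i<k} g_i φ^i at K-linearly independent
f_1,...,f_n gives an F-linear MRD code of dimension k and minimum rank distance n-k+1. -/
theorem stmt_15 (F : Type*) [Field F] (e : F ≃+* F)
    (n k : ℕ) (hk : 0 < k) (hkn : k ≤ n)
    (hn : (n : Cardinal) ≤ Module.rank (fixedSubfield e) F)
    (f : Fin n → F) (hf : LinearIndependent (fixedSubfield e) f)
    (Ev : (Fin k → F) →ₗ[F] (Fin n → F))
    (hEv : ∀ (g : Fin k → F) (j : Fin n),
      Ev g j = ∑ i : Fin k, g i * (⇑e)^[(i : ℕ)] (f j)) :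
    Module.finrank F (LinearMap.range Ev) = k ∧
    (∀ c ∈ LinearMap.range Ev, c ≠ 0 →
      n - k + 1 ≤ Module.finrank (fixedSubfield e)
        (Submodule.span (fixedSubfield e) (Set.range c))) ∧
    (∃ c ∈ LinearMap.range Ev, c ≠ 0 ∧
      Module.finrank (fixedSubfield e)
        (Submodule.span (fixedSubfield e) (Set.range c)) = n - k + 1) := by
  have hinj : Function.Injective Ev := by
    rw [← LinearMap.ker_eq_bot, LinearMap.ker_eq_bot']
    intro g hg0
    refine Stmt15Aux.mooreB' e k (f ∘ Fin.castLE hkn) g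
      (hf.comp _ (Fin.castLE_injective hkn)) fun j => ?_
    have h := congrFun hg0 (Fin.castLE hkn j)
    rw [Pi.zero_apply, hEv] at h
    exact h
  have hr1 : Module.finrank F (LinearMap.range Ev) = k := by
    rw [LinearMap.finrank_range_of_inj hinj, Module.finrank_pi, Fintype.card_fin]
  refine ⟨hr1, ?_, ?_⟩
  · rintro c ⟨g, rfl⟩ hc0
    have hg : g ≠ 0 := fun h => hc0 (by rw [h, map_zero])
    exact (Stmt15Aux.eval_rank e n k hk hkn f hf g hg (Ev g) (hEv g)).1
  · have h1 : k - 1 ≤ n := by omega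
    set T2 : (Fin k → F) →ₗ[F] (Fin (k - 1) → F) :=
      (LinearMap.funLeft F F (Fin.castLE h1)).comp Ev with hT2
    have hker2 : LinearMap.ker T2 ≠ ⊥ := by
      intro hbot
      have hinj2 : Function.Injective T2 := LinearMap.ker_eq_bot.mp hbot
      have hle := LinearMap.finrank_le_finrank_of_injective hinj2
      rw [Module.finrank_pi, Module.finrank_pi, Fintype.card_fin, Fintype.card_fin] at hle
      omega
    obtain ⟨g, hgmem, hg0⟩ := (Submodule.ne_bot_iff _).mp hker2
    have hvanish : ∀ j : Fin n, (j : ℕ) < k - 1 → Ev g j = 0 := by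
      intro j hj
      have h2 : T2 g = 0 := LinearMap.mem_ker.mp hgmem
      have h3 := congrFun h2 ⟨(j : ℕ), hj⟩
      rw [Pi.zero_apply] at h3
      have h4 : Fin.castLE h1 ⟨(j : ℕ), hj⟩ = j := Fin.ext rfl
      have h5 : T2 g ⟨(j : ℕ), hj⟩ = Ev g (Fin.castLE h1 ⟨(j : ℕ), hj⟩) := rfl
      rw [h5, h4] at h3
      exact h3
    have hcne : Ev g ≠ 0 := fun h => hg0 (hinj (by rw [h, map_zero]))
    exact ⟨Ev g, ⟨g, rfl⟩, hcne,
      (Stmt15Aux.eval_rank e n k hk hkn f hf g hg0 (Ev g) (hEv g)).2 hvanish⟩
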